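/- Let λ > 0, l ∈ ℝ, ε > 0, and f : (0,ε) → (0,∞) a continuous function with ∫₀^ε f(x) dx = +∞. Suppose a, b : (0,ε) → ℂ are differentiable and satisfy the system a'(x) = -λ·a(x) + l·f(x)·b(x) and b'(x) = -l·f(x)·a(x) + λ·b(x) for all x ∈ (0,ε), together with ∫₀^ε (|a(x)|² + |b(x)|²) f(x) dx < ∞. Then a(x) = 0 and b(x) = 0 for all x ∈ (0,ε). -/

import Mathlib

open MeasureTheory Set Filter

/-- The system `a' = -λa + l f b`, `b' = -l f a + λ b` (with `λ > 0`, `l` real,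
`f : (0,ε) → (0,∞)` continuous with divergent integral) has no nonzero solution
square-integrable with respect to `f dx`. -/
theorem ode_system_no_L2_solution
    (lam l ε : ℝ) (hlam : 0 < lam) (hε : 0 < ε)
    (f : ℝ → ℝ) (hf_cont : ContinuousOn f (Set.Ioo 0 ε))
    (hf_pos : ∀ x ∈ Set.Ioo 0 ε, 0 < f x)
    (hf_div : ∫⁻ x in Set.Ioo 0 ε, ENNReal.ofReal (f x) = ⊤)
    (a b : ℝ → ℂ)
    (ha : ∀ x ∈ Set.Ioo 0 ε,
      HasDerivAt a (-(lam : ℂ) * a x + ((l * f x : ℝ) : ℂ) * b x) x)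
    (hb : ∀ x ∈ Set.Ioo 0 ε,
      HasDerivAt b (-((l * f x : ℝ) : ℂ) * a x + (lam : ℂ) * b x) x)
    (hL2 : ∫⁻ x in Set.Ioo 0 ε,
      ENNReal.ofReal ((‖a x‖ ^ 2 + ‖b x‖ ^ 2) * f x) < ⊤) :
    ∀ x ∈ Set.Ioo 0 ε, a x = 0 ∧ b x = 0 := by
  -- the energy `E x = ‖a x‖² + ‖b x‖²` satisfies `E' = -2λ(‖a‖² - ‖b‖²)`
  have hE : ∀ x ∈ Set.Ioo 0 ε,
      HasDerivAt (fun y => ‖a y‖ ^ 2 + ‖b y‖ ^ 2)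
        (-2 * lam * (‖a x‖ ^ 2 - ‖b x‖ ^ 2)) x := by
    intro x hx
    have hda := ha x hx
    have hdb := hb x hx
    have hAr := Complex.reCLM.hasFDerivAt.comp_hasDerivAt x hda
    have hAi := Complex.imCLM.hasFDerivAt.comp_hasDerivAt x hda
    have hBr := Complex.reCLM.hasFDerivAt.comp_hasDerivAt x hdb
    have hBi := Complex.imCLM.hasFDerivAt.comp_hasDerivAt x hdb
    have H := ((hAr.mul hAr).add (hAi.mul hAi)).add ((hBr.mul hBr).add (hBi.mul hBi))
    have hfun : (fun y => (Complex.reCLM ∘ a) y * (Complex.reCLM ∘ a) y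
          + (Complex.imCLM ∘ a) y * (Complex.imCLM ∘ a) y
        + ((Complex.reCLM ∘ b) y * (Complex.reCLM ∘ b) y
          + (Complex.imCLM ∘ b) y * (Complex.imCLM ∘ b) y))
        = (fun y => ‖a y‖ ^ 2 + ‖b y‖ ^ 2) := by
      funext y
      simp [Function.comp, ← Complex.normSq_eq_norm_sq, Complex.normSq_apply]
    replace H : HasDerivAt (fun y => (Complex.reCLM ∘ a) y * (Complex.reCLM ∘ a) y
          + (Complex.imCLM ∘ a) y * (Complex.imCLM ∘ a) y
        + ((Complex.reCLM ∘ b) y * (Complex.reCLM ∘ b) y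
          + (Complex.imCLM ∘ b) y * (Complex.imCLM ∘ b) y)) _ x := H
    rw [hfun] at H
    convert H using 1
    simp [Function.comp, ← Complex.normSq_eq_norm_sq, Complex.normSq_apply,
      Complex.add_re, Complex.add_im, Complex.mul_re,
      Complex.mul_im, Complex.neg_re, Complex.neg_im, Complex.ofReal_re,
      Complex.ofReal_im]
    ring
  intro x₀ hx₀
  by_contra hcon
  have hE0 : 0 < ‖a x₀‖ ^ 2 + ‖b x₀‖ ^ 2 := by
    rcases not_and_or.mp hcon with h | h
    · have h1 : 0 < ‖a x₀‖ := norm_pos_iff.mpr h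
      nlinarith [sq_nonneg ‖b x₀‖]
    · have h1 : 0 < ‖b x₀‖ := norm_pos_iff.mpr h
      nlinarith [sq_nonneg ‖a x₀‖]
  -- `E(x) e^{2λx}` is monotone, `E(x) e^{-2λx}` is antitone on `(0,ε)`
  have hlin : ∀ (r : ℝ) (x : ℝ), HasDerivAt (fun y : ℝ => r * y) r x := by
    intro r x
    simpa using (hasDerivAt_id x).const_mul r
  have hG : ∀ x ∈ Set.Ioo 0 ε,
      HasDerivAt (fun y => (‖a y‖ ^ 2 + ‖b y‖ ^ 2) * Real.exp (2 * lam * y))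
        ((-2 * lam * (‖a x‖ ^ 2 - ‖b x‖ ^ 2)) * Real.exp (2 * lam * x)
          + (‖a x‖ ^ 2 + ‖b x‖ ^ 2) * (Real.exp (2 * lam * x) * (2 * lam))) x :=
    fun x hx => (hE x hx).mul ((hlin (2 * lam) x).exp)
  have hH : ∀ x ∈ Set.Ioo 0 ε,
      HasDerivAt (fun y => (‖a y‖ ^ 2 + ‖b y‖ ^ 2) * Real.exp (-(2 * lam) * y))
        ((-2 * lam * (‖a x‖ ^ 2 - ‖b x‖ ^ 2)) * Real.exp (-(2 * lam) * x)
          + (‖a x‖ ^ 2 + ‖b x‖ ^ 2) * (Real.exp (-(2 * lam) * x) * (-(2 * lam)))) x :=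
    fun x hx => (hE x hx).mul ((hlin (-(2 * lam)) x).exp)
  have hGmono : MonotoneOn (fun y => (‖a y‖ ^ 2 + ‖b y‖ ^ 2) * Real.exp (2 * lam * y))
      (Set.Ioo 0 ε) := by
    apply monotoneOn_of_hasDerivWithinAt_nonneg (convex_Ioo 0 ε)
      (f' := fun x => (-2 * lam * (‖a x‖ ^ 2 - ‖b x‖ ^ 2)) * Real.exp (2 * lam * x)
          + (‖a x‖ ^ 2 + ‖b x‖ ^ 2) * (Real.exp (2 * lam * x) * (2 * lam)))
    · exact fun x hx => ((hG x hx).continuousAt).continuousWithinAt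
    · rw [interior_Ioo]
      exact fun x hx => (hG x hx).hasDerivWithinAt
    · rw [interior_Ioo]
      intro x hx
      nlinarith [Real.exp_pos (2 * lam * x), sq_nonneg ‖b x‖,
        mul_pos (Real.exp_pos (2 * lam * x)) hlam]
  have hHanti : AntitoneOn (fun y => (‖a y‖ ^ 2 + ‖b y‖ ^ 2) * Real.exp (-(2 * lam) * y))
      (Set.Ioo 0 ε) := by
    apply antitoneOn_of_hasDerivWithinAt_nonpos (convex_Ioo 0 ε)
      (f' := fun x => (-2 * lam * (‖a x‖ ^ 2 - ‖b x‖ ^ 2)) * Real.exp (-(2 * lam) * x)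
          + (‖a x‖ ^ 2 + ‖b x‖ ^ 2) * (Real.exp (-(2 * lam) * x) * (-(2 * lam)))) 
    · exact fun x hx => ((hH x hx).continuousAt).continuousWithinAt
    · rw [interior_Ioo]
      exact fun x hx => (hH x hx).hasDerivWithinAt
    · rw [interior_Ioo]
      intro x hx
      nlinarith [Real.exp_pos (-(2 * lam) * x), sq_nonneg ‖a x‖,
        mul_pos (Real.exp_pos (-(2 * lam) * x)) hlam]
  -- hence `E` is bounded below by a positive constant
  set c : ℝ := (‖a x₀‖ ^ 2 + ‖b x₀‖ ^ 2) * Real.exp (-(2 * lam * ε)) with hcdef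
  have hcpos : 0 < c := mul_pos hE0 (Real.exp_pos _)
  have hlow : ∀ x ∈ Set.Ioo 0 ε, c ≤ ‖a x‖ ^ 2 + ‖b x‖ ^ 2 := by
    intro x hx
    rcases le_total x x₀ with hle | hle
    · have hA := hHanti hx hx₀ hle
      simp only at hA
      have h1 : Real.exp (-(2 * lam) * x₀) * Real.exp (2 * lam * x)
          = Real.exp (2 * lam * x - 2 * lam * x₀) := by
        rw [← Real.exp_add]; ring_nf
      have h2 : Real.exp (-(2 * lam) * x) * Real.exp (2 * lam * x) = 1 := by
        rw [← Real.exp_add]; ring_nf; exact Real.exp_zero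
      have h3 : Real.exp (-(2 * lam * ε)) ≤ Real.exp (2 * lam * x - 2 * lam * x₀) := by
        apply Real.exp_le_exp.mpr
        nlinarith [hx.1, hx₀.2]
      nlinarith [mul_le_mul_of_nonneg_right hA (Real.exp_pos (2 * lam * x)).le,
        mul_le_mul_of_nonneg_left h3 hE0.le, Real.exp_pos (2 * lam * x)]
    · have hA := hGmono hx₀ hx hle
      simp only at hA
      have h1 : Real.exp (2 * lam * x₀) * Real.exp (-(2 * lam) * x)
          = Real.exp (2 * lam * x₀ - 2 * lam * x) := by
        rw [← Real.exp_add]; ring_nf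
      have h2 : Real.exp (2 * lam * x) * Real.exp (-(2 * lam) * x) = 1 := by
        rw [← Real.exp_add]; ring_nf; exact Real.exp_zero
      have h3 : Real.exp (-(2 * lam * ε)) ≤ Real.exp (2 * lam * x₀ - 2 * lam * x) := by
        apply Real.exp_le_exp.mpr
        nlinarith [hx₀.1, hx.2]
      nlinarith [mul_le_mul_of_nonneg_right hA (Real.exp_pos (-(2 * lam) * x)).le,
        mul_le_mul_of_nonneg_left h3 hE0.le, Real.exp_pos (-(2 * lam) * x)]
  -- conclude: the L² integral dominates `c ∫ f = ∞`
  have hmono : ∫⁻ x in Set.Ioo 0 ε, ENNReal.ofReal (c * f x)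
      ≤ ∫⁻ x in Set.Ioo 0 ε, ENNReal.ofReal ((‖a x‖ ^ 2 + ‖b x‖ ^ 2) * f x) :=
    setLIntegral_mono' measurableSet_Ioo fun x hx =>
      ENNReal.ofReal_le_ofReal
        (mul_le_mul_of_nonneg_right (hlow x hx) (hf_pos x hx).le)
  have heq : ∫⁻ x in Set.Ioo 0 ε, ENNReal.ofReal (c * f x) = ⊤ := by
    have h1 : ∀ x : ℝ, ENNReal.ofReal (c * f x)
        = ENNReal.ofReal c * ENNReal.ofReal (f x) := fun x =>
      ENNReal.ofReal_mul hcpos.le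
    simp_rw [h1]
    rw [lintegral_const_mul' _ _ ENNReal.ofReal_ne_top, hf_div, ENNReal.mul_top]
    simpa using hcpos
  exact hL2.ne (top_le_iff.mp (heq ▸ hmono))
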